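/- arXiv:2605.07829 — 3 statements merged into one kernel-verified Lean document; each statement's English description precedes it below -/
import Mathlib

section
/- Global optimality of the likelihood-ratio root: under the MLR assumptions, let c* ∈ (a,b) be the unique point with Λ(c*) = ρ. Then c* is the unique global minimiser of the weighted misclassification risk R over [a,b]; that is, R(c) > R(c*) for every c ∈ [a,b] with c ≠ c*. -/
/-- Global optimality of the likelihood-ratio root: under the MLR assumptions, the unique
point `c* ∈ (a,b)` with `f1(c*)/f0(c*) = ρ = (λ0·π0)/(λ1·π1)` is the unique global
minimiser of the weighted misclassification risk
`R(c) = λ1·π1·F1(c) + λ0·π0·(1 − F0(c))` over `[a,b]`: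
`R(c) > R(c*)` for every `c ∈ [a,b]`, `c ≠ c*`. -/
theorem mlr_root_global_optimality
    (a b lam0 lam1 pi0 pi1 : ℝ) (hab : a < b)
    (hlam0 : 0 < lam0) (hlam1 : 0 < lam1) (hpi0 : 0 < pi0) (hpi1 : 0 < pi1)
    (F0 F1 f0 f1 : ℝ → ℝ)
    (hF0cont : ContinuousOn F0 (Set.Icc a b)) (hF1cont : ContinuousOn F1 (Set.Icc a b))
    (hF0 : ∀ c ∈ Set.Ioo a b, HasDerivAt F0 (f0 c) c)
    (hF1 : ∀ c ∈ Set.Ioo a b, HasDerivAt F1 (f1 c) c)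
    (hf0cont : ContinuousOn f0 (Set.Ioo a b)) (hf1cont : ContinuousOn f1 (Set.Ioo a b))
    (hf0pos : ∀ c ∈ Set.Ioo a b, 0 < f0 c) (hf1pos : ∀ c ∈ Set.Ioo a b, 0 < f1 c)
    (hmono : StrictMonoOn (fun c => f1 c / f0 c) (Set.Ioo a b))
    (La Lb : ℝ)
    (hLa : Filter.Tendsto (fun c => f1 c / f0 c) (nhdsWithin a (Set.Ioi a)) (nhds La))
    (hLb : Filter.Tendsto (fun c => f1 c / f0 c) (nhdsWithin b (Set.Iio b)) (nhds Lb))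
    (hLaρ : La < lam0 * pi0 / (lam1 * pi1))
    (hLbρ : lam0 * pi0 / (lam1 * pi1) < Lb)
    (cs : ℝ) (hcs : cs ∈ Set.Ioo a b)
    (hcs_root : f1 cs / f0 cs = lam0 * pi0 / (lam1 * pi1)) :
    ∀ c ∈ Set.Icc a b, c ≠ cs →
      lam1 * pi1 * F1 cs + lam0 * pi0 * (1 - F0 cs) <
        lam1 * pi1 * F1 c + lam0 * pi0 * (1 - F0 c) := by
  intro c hc hne
  have hlp1 : 0 < lam1 * pi1 := mul_pos hlam1 hpi1
  set R : ℝ → ℝ := fun c => lam1 * pi1 * F1 c + lam0 * pi0 * (1 - F0 c) with hR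
  have hRcont : ContinuousOn R (Set.Icc a b) :=
    (continuousOn_const.mul hF1cont).add
      (continuousOn_const.mul (continuousOn_const.sub hF0cont))
  have hRderiv : ∀ x ∈ Set.Ioo a b,
      HasDerivAt R (lam1 * pi1 * f1 x - lam0 * pi0 * f0 x) x := by
    intro x hx
    have h1 := (hF1 x hx).const_mul (lam1 * pi1)
    have h0 := ((hF0 x hx).const_sub 1).const_mul (lam0 * pi0)
    have h := h1.add h0
    rw [show lam1 * pi1 * f1 x - lam0 * pi0 * f0 x = lam1 * pi1 * f1 x + lam0 * pi0 * -f0 x by ring]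
    exact h
  have hsigN : ∀ x ∈ Set.Ioo a b, x < cs → deriv R x < 0 := by
    intro x hx hxcs
    rw [(hRderiv x hx).deriv]
    have hΛ : f1 x / f0 x < lam0 * pi0 / (lam1 * pi1) :=
      hcs_root ▸ hmono hx hcs hxcs
    have hf0 := hf0pos x hx
    rw [div_lt_div_iff₀ hf0 hlp1] at hΛ
    nlinarith
  have hsigP : ∀ x ∈ Set.Ioo a b, cs < x → 0 < deriv R x := by
    intro x hx hxcs
    rw [(hRderiv x hx).deriv]
    have hΛ : lam0 * pi0 / (lam1 * pi1) < f1 x / f0 x :=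
      hcs_root ▸ hmono hcs hx hxcs
    have hf0 := hf0pos x hx
    rw [div_lt_div_iff₀ hlp1 hf0] at hΛ
    nlinarith
  have hanti : StrictAntiOn R (Set.Icc a cs) := by
    apply strictAntiOn_of_deriv_neg (convex_Icc a cs)
      (hRcont.mono (Set.Icc_subset_Icc le_rfl hcs.2.le))
    intro x hx
    rw [interior_Icc] at hx
    exact hsigN x ⟨hx.1, hx.2.trans hcs.2⟩ hx.2
  have hmon : StrictMonoOn R (Set.Icc cs b) := by
    apply strictMonoOn_of_deriv_pos (convex_Icc cs b)
      (hRcont.mono (Set.Icc_subset_Icc hcs.1.le le_rfl))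
    intro x hx
    rw [interior_Icc] at hx
    exact hsigP x ⟨hcs.1.trans hx.1, hx.2⟩ hx.1
  rcases lt_or_gt_of_ne hne with h | h
  · exact hanti ⟨hc.1, h.le⟩ ⟨hcs.1.le, le_rfl⟩ h
  · exact hmon ⟨le_rfl, hcs.2.le⟩ ⟨h.le, hc.2⟩ h
end

section
/- Sign structure of the risk derivative and strict monotonicity of the risk: under the MLR assumptions, let c* ∈ (a,b) be the unique point with Λ(c*) = ρ. Then the derivative φ(c) = λ1·π1·f1(c) − λ0·π0·f0(c) of R satisfies φ(c) < 0 for all c ∈ (a, c*) and φ(c) > 0 for all c ∈ (c*, b); consequently R is strictly decreasing on [a, c*] and strictly increasing on [c*, b]. -/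
/-- Sign structure of the risk derivative and strict monotonicity of the risk: under the
MLR assumptions, with `c* ∈ (a,b)` the unique point where `f1(c*)/f0(c*) = ρ`, the
derivative `φ(c) = λ1·π1·f1(c) − λ0·π0·f0(c)` of the risk `R` is negative on `(a,c*)`
and positive on `(c*,b)`; consequently `R` is strictly decreasing on `[a,c*]` and
strictly increasing on `[c*,b]`. -/
theorem mlr_risk_sign_structure
    (a b lam0 lam1 pi0 pi1 : ℝ) (hab : a < b)
    (hlam0 : 0 < lam0) (hlam1 : 0 < lam1) (hpi0 : 0 < pi0) (hpi1 : 0 < pi1)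
    (F0 F1 f0 f1 : ℝ → ℝ)
    (hF0cont : ContinuousOn F0 (Set.Icc a b)) (hF1cont : ContinuousOn F1 (Set.Icc a b))
    (hF0 : ∀ c ∈ Set.Ioo a b, HasDerivAt F0 (f0 c) c)
    (hF1 : ∀ c ∈ Set.Ioo a b, HasDerivAt F1 (f1 c) c)
    (hf0cont : ContinuousOn f0 (Set.Ioo a b)) (hf1cont : ContinuousOn f1 (Set.Ioo a b))
    (hf0pos : ∀ c ∈ Set.Ioo a b, 0 < f0 c) (hf1pos : ∀ c ∈ Set.Ioo a b, 0 < f1 c)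
    (hmono : StrictMonoOn (fun c => f1 c / f0 c) (Set.Ioo a b))
    (La Lb : ℝ)
    (hLa : Filter.Tendsto (fun c => f1 c / f0 c) (nhdsWithin a (Set.Ioi a)) (nhds La))
    (hLb : Filter.Tendsto (fun c => f1 c / f0 c) (nhdsWithin b (Set.Iio b)) (nhds Lb))
    (hLaρ : La < lam0 * pi0 / (lam1 * pi1))
    (hLbρ : lam0 * pi0 / (lam1 * pi1) < Lb)
    (cs : ℝ) (hcs : cs ∈ Set.Ioo a b)
    (hcs_root : f1 cs / f0 cs = lam0 * pi0 / (lam1 * pi1)) :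
    (∀ c ∈ Set.Ioo a cs, lam1 * pi1 * f1 c - lam0 * pi0 * f0 c < 0) ∧
    (∀ c ∈ Set.Ioo cs b, 0 < lam1 * pi1 * f1 c - lam0 * pi0 * f0 c) ∧
    StrictAntiOn (fun c => lam1 * pi1 * F1 c + lam0 * pi0 * (1 - F0 c)) (Set.Icc a cs) ∧
    StrictMonoOn (fun c => lam1 * pi1 * F1 c + lam0 * pi0 * (1 - F0 c)) (Set.Icc cs b) := by
  have hρ : 0 < lam1 * pi1 := mul_pos hlam1 hpi1
  have hρ0 : 0 < lam0 * pi0 := mul_pos hlam0 hpi0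
  have hsub : Set.Ioo a cs ⊆ Set.Ioo a b := Set.Ioo_subset_Ioo le_rfl hcs.2.le
  have hsub' : Set.Ioo cs b ⊆ Set.Ioo a b := Set.Ioo_subset_Ioo hcs.1.le le_rfl
  have hneg : ∀ c ∈ Set.Ioo a cs, lam1 * pi1 * f1 c - lam0 * pi0 * f0 c < 0 := by
    intro c hc
    have hc' : c ∈ Set.Ioo a b := hsub hc
    have h0 := hf0pos c hc'
    have hlt : f1 c / f0 c < f1 cs / f0 cs := hmono hc' hcs hc.2
    rw [hcs_root] at hlt
    rw [div_lt_div_iff₀ h0 hρ] at hlt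
    nlinarith
  have hpos : ∀ c ∈ Set.Ioo cs b, 0 < lam1 * pi1 * f1 c - lam0 * pi0 * f0 c := by
    intro c hc
    have hc' : c ∈ Set.Ioo a b := hsub' hc
    have h0 := hf0pos c hc'
    have hlt : f1 cs / f0 cs < f1 c / f0 c := hmono hcs hc' hc.1
    rw [hcs_root] at hlt
    rw [div_lt_div_iff₀ hρ h0] at hlt
    nlinarith
  have hRderiv : ∀ c ∈ Set.Ioo a b, HasDerivAt
      (fun c => lam1 * pi1 * F1 c + lam0 * pi0 * (1 - F0 c))
      (lam1 * pi1 * f1 c - lam0 * pi0 * f0 c) c := by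
    intro c hc
    have h1 := ((hF1 c hc).const_mul (lam1 * pi1))
    have h0 := (((hF0 c hc).const_sub 1).const_mul (lam0 * pi0))
    have := h1.add h0
    exact this.congr_deriv (by ring)
  have hRcont : ContinuousOn (fun c => lam1 * pi1 * F1 c + lam0 * pi0 * (1 - F0 c))
      (Set.Icc a b) := by
    exact (continuousOn_const.mul hF1cont).add
      (continuousOn_const.mul (continuousOn_const.sub hF0cont))
  refine ⟨hneg, hpos, ?_, ?_⟩
  · apply strictAntiOn_of_deriv_neg (convex_Icc a cs)
      (hRcont.mono (Set.Icc_subset_Icc le_rfl hcs.2.le))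
    intro c hc
    rw [interior_Icc] at hc
    rw [(hRderiv c (hsub hc)).deriv]
    exact hneg c hc
  · apply strictMonoOn_of_deriv_pos (convex_Icc cs b)
      (hRcont.mono (Set.Icc_subset_Icc hcs.1.le le_rfl))
    intro c hc
    rw [interior_Icc] at hc
    rw [(hRderiv c (hsub' hc)).deriv]
    exact hpos c hc
end

section
/- AUC as a two-sample probability: let μ0 and μ1 be probability measures on ℝ, suppose the CDF F0 of μ0 (defined by F0(c) = μ0((−∞,c])) restricts to a continuous strictly increasing bijection from ℝ onto (0,1), let Q0 : (0,1) → ℝ be its inverse, and let F1 be the CDF of μ1. Then ∫₀¹ (1 − F1(Q0(u))) du = (μ0 ⊗ μ1)({(x0, x1) ∈ ℝ × ℝ : x1 > x0}); that is, the area under the parametric ROC curve equals the probability that an independent draw from μ1 exceeds an independent draw from μ0. -/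
open MeasureTheory

/-- AUC as a two-sample probability: if the CDF `F0` of `μ0` is a continuous strictly
increasing bijection from `ℝ` onto `(0,1)` with inverse `Q0`, and `F1` is the CDF of
`μ1`, then `∫₀¹ (1 − F1(Q0(u))) du` equals the probability, under `μ0 ⊗ μ1`, that an
independent draw from `μ1` exceeds an independent draw from `μ0`. -/
theorem auc_eq_prob_exceed
    (μ0 μ1 : Measure ℝ) [IsProbabilityMeasure μ0] [IsProbabilityMeasure μ1]
    (F0 F1 Q0 : ℝ → ℝ)
    (hF0def : ∀ c, F0 c = (μ0 (Set.Iic c)).toReal)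
    (hF1def : ∀ c, F1 c = (μ1 (Set.Iic c)).toReal)
    (hF0cont : Continuous F0) (hF0mono : StrictMono F0)
    (hF0range : Set.range F0 = Set.Ioo 0 1)
    (hQ0left : ∀ x, Q0 (F0 x) = x)
    (hQ0right : ∀ u ∈ Set.Ioo (0 : ℝ) 1, F0 (Q0 u) = u) :
    ∫ u in Set.Ioo (0 : ℝ) 1, (1 - F1 (Q0 u)) =
      ((μ0.prod μ1) {q : ℝ × ℝ | q.1 < q.2}).toReal := by
  have hF0m : Measurable F0 := hF0cont.measurable
  have hF0mem : ∀ x, F0 x ∈ Set.Ioo (0 : ℝ) 1 := by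
    intro x
    rw [← hF0range]
    exact Set.mem_range_self x
  -- bounds on F1
  have hF1nonneg : ∀ c, 0 ≤ F1 c := fun c => by rw [hF1def]; exact ENNReal.toReal_nonneg
  have hF1le1 : ∀ c, F1 c ≤ 1 := by
    intro c
    rw [hF1def]
    calc (μ1 (Set.Iic c)).toReal ≤ (1 : ENNReal).toReal :=
          ENNReal.toReal_mono ENNReal.one_ne_top prob_le_one
      _ = 1 := by simp
  have hF1mono : Monotone F1 := by
    intro a b hab
    rw [hF1def, hF1def]
    exact ENNReal.toReal_mono (measure_ne_top _ _) (measure_mono (Set.Iic_subset_Iic.mpr hab))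
  have hμ0Iic : ∀ c, μ0 (Set.Iic c) = ENNReal.ofReal (F0 c) := by
    intro c
    rw [hF0def c, ENNReal.ofReal_toReal (measure_ne_top _ _)]
  -- Q0 is monotone on (0,1)
  have hQ0mono : ∀ u ∈ Set.Ioo (0:ℝ) 1, ∀ v ∈ Set.Ioo (0:ℝ) 1, u ≤ v → Q0 u ≤ Q0 v := by
    intro u hu v hv huv
    have : F0 (Q0 u) ≤ F0 (Q0 v) := by rw [hQ0right u hu, hQ0right v hv]; exact huv
    exact hF0mono.le_iff_le.mp this
  -- Step A : the pushforward of μ0 under F0 is uniform on (0,1)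
  haveI : IsFiniteMeasure (volume.restrict (Set.Ioo (0:ℝ) 1)) := by
    constructor
    rw [Measure.restrict_apply MeasurableSet.univ]
    simp [Real.volume_Ioo]
  haveI : IsProbabilityMeasure (μ0.map F0) := Measure.isProbabilityMeasure_map hF0m.aemeasurable
  have hmap : μ0.map F0 = volume.restrict (Set.Ioo (0:ℝ) 1) := by
    refine Measure.ext_of_Iic _ _ (fun a => ?_)
    rw [Measure.map_apply hF0m measurableSet_Iic, Measure.restrict_apply measurableSet_Iic]
    rcases le_or_gt a 0 with h0 | h0
    · have h1 : F0 ⁻¹' Set.Iic a = ∅ := by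
        ext x
        simp only [Set.mem_preimage, Set.mem_Iic, Set.mem_empty_iff_false, iff_false, not_le]
        exact lt_of_le_of_lt h0 (hF0mem x).1
      have h2 : Set.Iic a ∩ Set.Ioo 0 1 = ∅ := by
        ext x
        simp only [Set.mem_inter_iff, Set.mem_Iic, Set.mem_Ioo, Set.mem_empty_iff_false,
          iff_false, not_and]
        intro hx hx0
        exact absurd (lt_of_le_of_lt (hx.trans h0) hx0) (lt_irrefl _)
      rw [h1, h2]
      simp
    rcases lt_or_ge a 1 with h1 | h1
    · have ha : a ∈ Set.Ioo (0:ℝ) 1 := ⟨h0, h1⟩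
      have hpre : F0 ⁻¹' Set.Iic a = Set.Iic (Q0 a) := by
        ext x
        simp only [Set.mem_preimage, Set.mem_Iic]
        constructor
        · intro hx
          have : F0 x ≤ F0 (Q0 a) := by rw [hQ0right a ha]; exact hx
          exact hF0mono.le_iff_le.mp this
        · intro hx
          have := hF0mono.le_iff_le.mpr hx
          rwa [hQ0right a ha] at this
      have hint : Set.Iic a ∩ Set.Ioo 0 1 = Set.Ioc 0 a := by
        ext x
        simp only [Set.mem_inter_iff, Set.mem_Iic, Set.mem_Ioo, Set.mem_Ioc]
        constructor
        · rintro ⟨hxa, hx0, _⟩; exact ⟨hx0, hxa⟩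
        · rintro ⟨hx0, hxa⟩; exact ⟨hxa, hx0, lt_of_le_of_lt hxa h1⟩
      rw [hpre, hint, Real.volume_Ioc, hμ0Iic, hQ0right a ha]
      simp
    · have hpre : F0 ⁻¹' Set.Iic a = Set.univ := by
        ext x
        simp only [Set.mem_preimage, Set.mem_Iic, Set.mem_univ, iff_true]
        exact le_of_lt (lt_of_lt_of_le (hF0mem x).2 h1)
      have hint : Set.Iic a ∩ Set.Ioo 0 1 = Set.Ioo 0 1 := by
        apply Set.inter_eq_self_of_subset_right
        intro x hx
        exact le_of_lt (lt_of_lt_of_le hx.2 h1)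
      rw [hpre, hint, Real.volume_Ioo]
      simp
  -- measurability of the integrand on (0,1) via a monotone extension
  set g : ℝ → ℝ := fun u => if u ≤ 0 then 0 else if u < 1 then F1 (Q0 u) else 1 with hg_def
  have hgval : ∀ u ∈ Set.Ioo (0:ℝ) 1, g u = F1 (Q0 u) := by
    intro u hu
    simp [hg_def, not_le.mpr hu.1, hu.2]
  have hgrange : ∀ u, 0 ≤ g u ∧ g u ≤ 1 := by
    intro u
    by_cases h0 : u ≤ 0
    · simp [hg_def, h0]
    by_cases h1 : u < 1
    · simp only [hg_def, h0, if_false, h1, if_true]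
      exact ⟨hF1nonneg _, hF1le1 _⟩
    · simp [hg_def, h0, h1]
  have hgmono : Monotone g := by
    intro u v huv
    by_cases hv0 : v ≤ 0
    · have hu0 : u ≤ 0 := huv.trans hv0
      simp [hg_def, hu0, hv0]
    by_cases hu0 : u ≤ 0
    · have : g u = 0 := by simp [hg_def, hu0]
      rw [this]; exact (hgrange v).1
    by_cases hv1 : v < 1
    · have hu1 : u < 1 := lt_of_le_of_lt huv hv1
      simp only [hg_def, hu0, if_false, hv0, hu1, hv1, if_true]
      exact hF1mono (hQ0mono u ⟨not_le.mp hu0, hu1⟩ v ⟨not_le.mp hv0, hv1⟩ huv)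
    · have : g v = 1 := by simp [hg_def, hv0, hv1]
      rw [this]; exact (hgrange u).2
  have hae : (fun u => 1 - g u) =ᵐ[volume.restrict (Set.Ioo (0:ℝ) 1)]
      (fun u => 1 - F1 (Q0 u)) := by
    filter_upwards [ae_restrict_mem measurableSet_Ioo] with u hu
    rw [hgval u hu]
  have hmeas : AEStronglyMeasurable (fun u => 1 - F1 (Q0 u))
      (volume.restrict (Set.Ioo (0:ℝ) 1)) :=
    ((measurable_const.sub hgmono.measurable).aestronglyMeasurable).congr hae
  -- measurability of x ↦ μ1 (Ioi x)
  have hs : MeasurableSet {q : ℝ × ℝ | q.1 < q.2} :=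
    measurableSet_lt measurable_fst measurable_snd
  have hpre2 : ∀ x : ℝ, (Prod.mk x ⁻¹' {q : ℝ × ℝ | q.1 < q.2}) = Set.Ioi x := fun x => rfl
  have hmm : Measurable fun x => μ1 (Set.Ioi x) := by
    have := measurable_measure_prodMk_left (ν := μ1) hs
    simpa [hpre2] using this
  -- main computation
  calc ∫ u in Set.Ioo (0:ℝ) 1, (1 - F1 (Q0 u))
      = ∫ u, (1 - F1 (Q0 u)) ∂(μ0.map F0) := by rw [hmap]
    _ = ∫ x, (1 - F1 (Q0 (F0 x))) ∂μ0 :=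
        integral_map hF0m.aemeasurable (by rw [hmap]; exact hmeas)
    _ = ∫ x, (μ1 (Set.Ioi x)).toReal ∂μ0 := by
        refine integral_congr_ae (Filter.Eventually.of_forall fun x => ?_)
        show 1 - F1 (Q0 (F0 x)) = (μ1 (Set.Ioi x)).toReal
        rw [hQ0left, hF1def]
        have h1 : μ1 (Set.Ioi x) = 1 - μ1 (Set.Iic x) := by
          have := measure_compl (μ := μ1) (s := Set.Iic x) measurableSet_Iic (measure_ne_top _ _)
          rw [Set.compl_Iic] at this
          rw [this]
          simp
        rw [h1, ENNReal.toReal_sub_of_le prob_le_one ENNReal.one_ne_top]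
        simp
    _ = (∫⁻ x, μ1 (Set.Ioi x) ∂μ0).toReal :=
        integral_toReal hmm.aemeasurable
          (Filter.Eventually.of_forall fun x => measure_lt_top _ _)
    _ = ((μ0.prod μ1) {q : ℝ × ℝ | q.1 < q.2}).toReal := by
        rw [Measure.prod_apply hs]
        simp only [hpre2]
end
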